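/- Let γ be an irrational real number which is a quadratic algebraic integer, i.e. γ² + b·γ + c = 0 for some integers b and c, and let γ̄ = −b − γ be its Galois conjugate. Then for all integers i, j, k, l with i·l − j·k = 1 or i·l − j·k = −1, one has |(i·γ + j)/(k·γ + l) − (i·γ̄ + j)/(k·γ̄ + l)| ≤ |γ − γ̄|. In other words, a quadratic algebraic integer maximizes the height h(z) = |z − z̄| within its PGL₂(ℤ)-orbit. -/

import Mathlib

/-- A quadratic algebraic integer maximizes the height `h(z) = |z - z̄|` within its
`PGL₂(ℤ)`-orbit. -/
theorem stmt_12 (γ : ℝ) (hγ : Irrational γ) (b c : ℤ)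
    (heq : γ ^ 2 + (b : ℝ) * γ + (c : ℝ) = 0) :
    ∀ i j k l : ℤ, (i * l - j * k = 1 ∨ i * l - j * k = -1) →
      |((i : ℝ) * γ + (j : ℝ)) / ((k : ℝ) * γ + (l : ℝ)) -
        ((i : ℝ) * (-(b : ℝ) - γ) + (j : ℝ)) / ((k : ℝ) * (-(b : ℝ) - γ) + (l : ℝ))| ≤
      |γ - (-(b : ℝ) - γ)| := by
  intro i j k l hdet
  have hdet' : i * l - j * k ≠ 0 := by rcases hdet with h | h <;> omega
  have hγ' : Irrational (-(b : ℝ) - γ) := by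
    have := ((hγ.neg).intCast_add (-b))
    convert this using 1
    push_cast
    ring
  have hne : ∀ δ : ℝ, Irrational δ → (k : ℝ) * δ + (l : ℝ) ≠ 0 := by
    intro δ hδ h0
    by_cases hk : k = 0
    · subst hk
      have hl : (l : ℝ) = 0 := by simpa using h0
      have hl' : l = 0 := by exact_mod_cast hl
      subst hl'
      exact hdet' (by ring)
    · apply hδ
      refine ⟨(-l : ℚ) / k, ?_⟩
      have hk' : (k : ℝ) ≠ 0 := Int.cast_ne_zero.mpr hk
      push_cast
      field_simp
      linarith
  have h1 : (k : ℝ) * γ + (l : ℝ) ≠ 0 := hne γ hγ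
  have h2 : (k : ℝ) * (-(b : ℝ) - γ) + (l : ℝ) ≠ 0 := hne _ hγ'
  set D : ℤ := k ^ 2 * c - k * l * b + l ^ 2 with hD
  have hDeq : ((k : ℝ) * γ + (l : ℝ)) * ((k : ℝ) * (-(b : ℝ) - γ) + (l : ℝ)) = (D : ℝ) := by
    have hγ2 : γ ^ 2 = -(b : ℝ) * γ - (c : ℝ) := by linarith
    push_cast [hD]
    nlinarith [hγ2]
  have hDne : D ≠ 0 := by
    intro h
    apply mul_ne_zero h1 h2
    rw [hDeq, h]; simp
  have hDabs : (1 : ℝ) ≤ |(D : ℝ)| := by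
    rw [← Int.cast_abs]
    exact_mod_cast Int.one_le_abs hDne
  have key : ((i : ℝ) * γ + (j : ℝ)) / ((k : ℝ) * γ + (l : ℝ)) -
      ((i : ℝ) * (-(b : ℝ) - γ) + (j : ℝ)) / ((k : ℝ) * (-(b : ℝ) - γ) + (l : ℝ)) =
      ((i * l - j * k : ℤ) : ℝ) * (γ - (-(b : ℝ) - γ)) / (D : ℝ) := by
    rw [div_sub_div _ _ h1 h2, ← hDeq]
    congr 1
    push_cast
    ring
  rw [key, abs_div, abs_mul]
  have habs1 : |((i * l - j * k : ℤ) : ℝ)| = 1 := by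
    rcases hdet with h | h <;> rw [h] <;> simp
  rw [habs1, one_mul]
  rw [div_le_iff₀ (by linarith : (0:ℝ) < |(D : ℝ)|)]
  nlinarith [abs_nonneg (γ - (-(b : ℝ) - γ))]
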